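/- (Ward's divisibility test, one direction) Let v_1, ..., v_{k+2} be binary vectors in GF(2)^n such that for every 1 ≤ j ≤ k+2 and every choice of j distinct indices i_1 < ... < i_j, the Hamming weight of the componentwise product v_{i_1}·...·v_{i_j} is divisible by 2^{k+2-j}. Then every vector in the GF(2)-span of v_1, ..., v_{k+2} has Hamming weight divisible by 2^{k+1}. -/

import Mathlib

open Finset
open scoped symmDiff

/-- The Hamming weight of a vector over `ZMod 2`. -/
def hamWt {n : ℕ} (v : Fin n → ZMod 2) : ℕ :=
  (Finset.univ.filter (fun i => v i ≠ 0)).card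

variable {α : Type*} [DecidableEq α]

lemma powerset_sum_pow (A : Finset α) (x : ℤ) :
    ∑ S ∈ A.powerset, x ^ S.card = (x + 1) ^ A.card := by
  induction A using Finset.induction with
  | empty => simp
  | insert a A ha ih =>
    rw [Finset.sum_powerset_insert ha]
    have : ∑ t ∈ A.powerset, x ^ (insert a t).card = ∑ t ∈ A.powerset, x * x ^ t.card := by
      refine Finset.sum_congr rfl fun t ht => ?_
      rw [Finset.card_insert_of_notMem (fun h => ha (Finset.mem_powerset.mp ht h)), pow_succ]
      ring
    rw [this, ih, Finset.card_insert_of_notMem ha, ← Finset.mul_sum, ih, pow_succ]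
    ring

lemma lemA (A : Finset α) :
    ∑ S ∈ A.powerset.filter (Finset.Nonempty), (-2 : ℤ) ^ (S.card - 1) =
      if Odd A.card then 1 else 0 := by
  induction A using Finset.induction with
  | empty => simp [Finset.filter_singleton, Finset.not_nonempty_empty]
  | insert a A ha ih =>
    rw [Finset.sum_filter] at ih ⊢
    rw [Finset.sum_powerset_insert ha]
    have h2 : ∑ t ∈ A.powerset,
        (if (insert a t).Nonempty then (-2 : ℤ) ^ ((insert a t).card - 1) else 0)
        = ∑ t ∈ A.powerset, (-2 : ℤ) ^ t.card := by
      refine Finset.sum_congr rfl fun t ht => ?_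
      rw [if_pos (Finset.insert_nonempty _ _),
        Finset.card_insert_of_notMem (fun h => ha (Finset.mem_powerset.mp ht h))]
      simp
    rw [h2, ih, powerset_sum_pow, Finset.card_insert_of_notMem ha]
    rcases Nat.even_or_odd A.card with he | ho
    · rw [if_neg (by simp [Nat.not_odd_iff_even, he]),
        if_pos (by simp [Nat.odd_add_one, Nat.not_odd_iff_even, he])]
      rw [show (-2 + 1 : ℤ) = -1 by ring, Even.neg_one_pow he]
      ring
    · rw [if_pos ho, if_neg (by simp [Nat.odd_add_one, ho, Nat.not_even_iff_odd])]
      rw [show (-2 + 1 : ℤ) = -1 by ring, Odd.neg_one_pow ho]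
      ring

lemma lemB {ι : Type*} [DecidableEq ι] {n : ℕ} (T : Finset ι) (v : ι → Fin n → ZMod 2) :
    (hamWt (∑ i ∈ T, v i) : ℤ) =
      ∑ S ∈ T.powerset.filter (Finset.Nonempty),
        (-2 : ℤ) ^ (S.card - 1) * (hamWt (∏ i ∈ S, v i) : ℤ) := by
  have hw : ∀ w : Fin n → ZMod 2, (hamWt w : ℤ) = ∑ x : Fin n, if w x ≠ 0 then 1 else 0 := by
    intro w
    rw [hamWt, Finset.card_filter]
    push_cast
    rfl
  rw [hw]
  have hrhs : ∑ S ∈ T.powerset.filter (Finset.Nonempty),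
        (-2 : ℤ) ^ (S.card - 1) * (hamWt (∏ i ∈ S, v i) : ℤ)
      = ∑ S ∈ T.powerset.filter (Finset.Nonempty), ∑ x : Fin n,
        (-2 : ℤ) ^ (S.card - 1) * if (∏ i ∈ S, v i) x ≠ 0 then 1 else 0 :=
    Finset.sum_congr rfl fun S _ => by rw [hw, Finset.mul_sum]
  rw [hrhs, Finset.sum_comm]
  refine Finset.sum_congr rfl fun x _ => ?_
  set A : Finset ι := T.filter (fun i => v i x ≠ 0) with hA
  have hAT : A ⊆ T := Finset.filter_subset _ _
  -- RHS pointwise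
  have hprod : ∀ S ∈ T.powerset.filter (Finset.Nonempty),
      ((∏ i ∈ S, v i) x ≠ 0 ↔ S ⊆ A) := by
    intro S hS
    rw [Finset.mem_filter, Finset.mem_powerset] at hS
    rw [Finset.prod_apply, Finset.prod_ne_zero_iff]
    constructor
    · intro hall i hi
      exact Finset.mem_filter.mpr ⟨hS.1 hi, hall i hi⟩
    · intro hsub i hi
      exact (Finset.mem_filter.mp (hsub hi)).2
  have hR : ∑ S ∈ T.powerset.filter (Finset.Nonempty),
      ((-2 : ℤ) ^ (S.card - 1) * if (∏ i ∈ S, v i) x ≠ 0 then 1 else 0)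
      = ∑ S ∈ A.powerset.filter (Finset.Nonempty), (-2 : ℤ) ^ (S.card - 1) := by
    have e1 : ∑ S ∈ T.powerset.filter (Finset.Nonempty),
        ((-2 : ℤ) ^ (S.card - 1) * if (∏ i ∈ S, v i) x ≠ 0 then 1 else 0)
        = ∑ S ∈ T.powerset.filter (Finset.Nonempty),
          (if S ⊆ A then (-2 : ℤ) ^ (S.card - 1) else 0) := by
      refine Finset.sum_congr rfl fun S hS => ?_
      by_cases hsub : S ⊆ A
      · rw [if_pos hsub, if_pos ((hprod S hS).mpr hsub), mul_one]
      · rw [if_neg hsub, if_neg (fun hc => hsub ((hprod S hS).mp hc)), mul_zero]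
    rw [e1, ← Finset.sum_filter]
    congr 1
    ext S
    simp only [Finset.mem_filter, Finset.mem_powerset]
    constructor
    · rintro ⟨⟨_, hne⟩, hsA⟩
      exact ⟨hsA, hne⟩
    · rintro ⟨hsA, hne⟩
      exact ⟨⟨hsA.trans hAT, hne⟩, hsA⟩
  rw [hR, lemA]
  -- LHS pointwise
  have key : ∀ a : ZMod 2, a = if a ≠ 0 then 1 else 0 := by decide
  have hsum : (∑ i ∈ T, v i) x = (A.card : ZMod 2) := by
    rw [Finset.sum_apply]
    calc ∑ c ∈ T, v c x = ∑ c ∈ T, if v c x ≠ 0 then (1 : ZMod 2) else 0 :=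
          Finset.sum_congr rfl fun c _ => key (v c x)
      _ = ∑ c ∈ A, (1 : ZMod 2) := (Finset.sum_filter _ _).symm
      _ = (A.card : ZMod 2) := by simp
  have hodd : (∑ i ∈ T, v i) x ≠ 0 ↔ Odd A.card := by
    rw [hsum, Ne, ZMod.natCast_eq_zero_iff, Nat.two_dvd_ne_zero, Nat.odd_iff]
  simp only [hodd]

lemma sum_add_sum_symmDiff {ι : Type*} [DecidableEq ι] {n : ℕ} (T T' : Finset ι)
    (f : ι → Fin n → ZMod 2) :
    (∑ i ∈ T, f i) + (∑ i ∈ T', f i) = ∑ i ∈ T ∆ T', f i := by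
  have hself : ∀ w : Fin n → ZMod 2, w + w = 0 := fun w => by
    funext x; exact CharTwo.add_self_eq_zero _
  have h1 : (∑ i ∈ T ∆ T', f i) + ∑ i ∈ T ∩ T', f i = ∑ i ∈ T ∪ T', f i := by
    rw [symmDiff_eq_sup_sdiff_inf]
    exact Finset.sum_sdiff (Finset.inter_subset_union)
  have h2 := Finset.sum_union_inter (s₁ := T) (s₂ := T') (f := f)
  calc (∑ i ∈ T, f i) + (∑ i ∈ T', f i)
      = ∑ i ∈ T ∪ T', f i + ∑ i ∈ T ∩ T', f i := h2.symm
    _ = (∑ i ∈ T ∆ T', f i) + (∑ i ∈ T ∩ T', f i + ∑ i ∈ T ∩ T', f i) := by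
        rw [← h1]; abel
    _ = ∑ i ∈ T ∆ T', f i := by rw [hself, add_zero]

/-- Ward's divisibility test (sufficiency direction): if the componentwise
products of every `j` distinct generators have weight divisible by
`2^(k+2-j)`, then every codeword in the span has weight divisible by
`2^(k+1)`. -/
theorem wards_divisibility_test (k n : ℕ) (v : Fin (k + 2) → (Fin n → ZMod 2))
    (h : ∀ S : Finset (Fin (k + 2)), S.Nonempty →
      2 ^ (k + 2 - S.card) ∣ hamWt (∏ i ∈ S, v i)) :
    ∀ w ∈ Submodule.span (ZMod 2) (Set.range v), 2 ^ (k + 1) ∣ hamWt w := by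
  intro w hw
  have hrep : ∃ T : Finset (Fin (k + 2)), w = ∑ i ∈ T, v i := by
    induction hw using Submodule.span_induction with
    | mem x hx =>
      obtain ⟨i, rfl⟩ := hx
      exact ⟨{i}, by simp⟩
    | zero => exact ⟨∅, by simp⟩
    | add x y hx hy ihx ihy =>
      obtain ⟨T, rfl⟩ := ihx
      obtain ⟨T', rfl⟩ := ihy
      exact ⟨T ∆ T', sum_add_sum_symmDiff T T' v⟩
    | smul c x hx ihx =>
      obtain ⟨T, rfl⟩ := ihx
      have hc : ∀ a : ZMod 2, a = 0 ∨ a = 1 := by decide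
      rcases hc c with rfl | rfl
      · exact ⟨∅, by simp⟩
      · exact ⟨T, by simp⟩
  obtain ⟨T, rfl⟩ := hrep
  have hdvd : (2 : ℤ) ^ (k + 1) ∣ (hamWt (∑ i ∈ T, v i) : ℤ) := by
    rw [lemB]
    refine Finset.dvd_sum fun S hS => ?_
    rw [Finset.mem_filter, Finset.mem_powerset] at hS
    have hc1 : 1 ≤ S.card := Finset.card_pos.mpr hS.2
    have hc2 : S.card ≤ k + 2 := le_trans (Finset.card_le_card hS.1) (by simpa using Finset.card_le_univ T)
    have e : k + 1 = (S.card - 1) + (k + 2 - S.card) := by omega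
    rw [e, pow_add]
    refine mul_dvd_mul ?_ ?_
    · have : ((-2 : ℤ)) ^ (S.card - 1) = (-1) ^ (S.card - 1) * 2 ^ (S.card - 1) := by
        rw [← neg_one_mul, mul_pow]
      rw [this]
      exact dvd_mul_left _ _
    · exact_mod_cast Int.natCast_dvd_natCast.mpr (h S hS.2)
  have := Int.natCast_dvd_natCast.mp (by push_cast at hdvd ⊢; exact hdvd :
    ((2 ^ (k + 1) : ℕ) : ℤ) ∣ ((hamWt (∑ i ∈ T, v i) : ℕ) : ℤ))
  exact this
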